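/- Let r, d, n ∈ ℕ with πd < r + 2. Then for every α ∈ ℕ^n_d, the product Jackson coefficient λ_α^r := ∏_{i=1}^n λ_{α_i}^r satisfies 1 − π²d²/(r+2)² ≤ λ_α^r ≤ 1; in particular |1 − λ_α^r| ≤ π²d²/(r+2)². -/

import Mathlib

/-- The univariate Jackson coefficients: `λ^r_0 = 1` and, for `k ≥ 1`,
`λ^r_k = (1/(r+2)) ((r+2−k) cos(k θ_r) + (sin(k θ_r)/sin θ_r) cos θ_r)` with
`θ_r = π/(r+2)`. -/
noncomputable def jacksonCoef (r k : ℕ) : ℝ :=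
  if k = 0 then 1
  else (1 / ((r : ℝ) + 2)) *
    (((r : ℝ) + 2 - k) * Real.cos (k * (Real.pi / ((r : ℝ) + 2))) +
      (Real.sin (k * (Real.pi / ((r : ℝ) + 2))) / Real.sin (Real.pi / ((r : ℝ) + 2))) *
        Real.cos (Real.pi / ((r : ℝ) + 2)))

/-- The multi-indices `α ∈ ℕ^n` with `∑_i α_i ≤ d`. -/
def multiIdx (n d : ℕ) : Finset (Fin n → ℕ) :=
  (Fintype.piFinset fun _ : Fin n => Finset.range (d + 1)).filter fun α => ∑ i, α i ≤ d

private lemma sin_nat_mul_le' (θ : ℝ) (hθ : 0 ≤ θ) :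
    ∀ k : ℕ, (k : ℝ) * θ ≤ Real.pi → Real.sin ((k : ℝ) * θ) ≤ k * Real.sin θ := by
  intro k
  induction k with
  | zero => simp
  | succ k ih =>
    intro hk
    have hkcast : (0 : ℝ) ≤ (k : ℝ) := Nat.cast_nonneg k
    have hθπ : θ ≤ Real.pi := by
      have h1 : (1 : ℝ) * θ ≤ ((k : ℝ) + 1) * θ := by nlinarith
      push_cast at hk; linarith
    have hkθ : (k : ℝ) * θ ≤ Real.pi := by
      push_cast at hk; nlinarith
    have ih' := ih hkθ
    have h1 : 0 ≤ Real.sin ((k : ℝ) * θ) :=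
      Real.sin_nonneg_of_nonneg_of_le_pi (by positivity) hkθ
    have h2 : 0 ≤ Real.sin θ := Real.sin_nonneg_of_nonneg_of_le_pi hθ hθπ
    have c1 : Real.cos ((k : ℝ) * θ) ≤ 1 := Real.cos_le_one _
    have c2 : Real.cos θ ≤ 1 := Real.cos_le_one _
    push_cast
    rw [show ((k : ℝ) + 1) * θ = (k : ℝ) * θ + θ by ring, Real.sin_add]
    nlinarith

set_option maxHeartbeats 1000000 in
private lemma jackson_coef_bound (r k : ℕ) (hk : (k : ℝ) * (Real.pi / ((r : ℝ) + 2)) < 1) :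
    1 - Real.pi ^ 2 * k ^ 2 / ((r : ℝ) + 2) ^ 2 ≤ jacksonCoef r k ∧ jacksonCoef r k ≤ 1 := by
  rcases Nat.eq_zero_or_pos k with h0 | hpos
  · subst h0; constructor <;> simp [jacksonCoef]
  set N : ℝ := (r : ℝ) + 2 with hN
  have hN2 : (2 : ℝ) ≤ N := by rw [hN]; have := Nat.cast_nonneg (α := ℝ) r; linarith
  have hNpos : (0 : ℝ) < N := by linarith
  set θ : ℝ := Real.pi / N with hθdef
  have hθpos : 0 < θ := by rw [hθdef]; positivity
  have hk1 : (1 : ℝ) ≤ (k : ℝ) := by exact_mod_cast hpos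
  have hθlt : θ < 1 := by nlinarith
  have hθhalf : θ ≤ Real.pi / 2 := by
    rw [hθdef, div_le_div_iff₀ hNpos two_pos]
    nlinarith [Real.pi_pos]
  have hθπ : θ < Real.pi := by nlinarith [Real.pi_gt_three]
  have hsθ : 0 < Real.sin θ := Real.sin_pos_of_pos_of_lt_pi hθpos hθπ
  have hcθ : 0 ≤ Real.cos θ := Real.cos_nonneg_of_mem_Icc ⟨by linarith, hθhalf⟩
  have hkθpos : 0 < (k : ℝ) * θ := by positivity
  have hkθ1 : (k : ℝ) * θ < 1 := hk
  have hπN : Real.pi = θ * N := by rw [hθdef]; field_simp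
  have hkN : (k : ℝ) < N := by nlinarith [Real.pi_gt_three]
  have hval : jacksonCoef r k = (1 / N) *
      ((N - k) * Real.cos ((k : ℝ) * θ) +
        (Real.sin ((k : ℝ) * θ) / Real.sin θ) * Real.cos θ) := by
    rw [jacksonCoef, if_neg (Nat.pos_iff_ne_zero.mp hpos)]
  have hπeq : Real.pi ^ 2 * (k : ℝ) ^ 2 / N ^ 2 = (k : ℝ) ^ 2 * θ ^ 2 := by
    rw [hπN]; field_simp
  clear_value N θ
  set C := Real.cos ((k : ℝ) * θ) with hC
  set S := Real.sin ((k : ℝ) * θ) with hS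
  have hcos : 1 - ((k : ℝ) * θ) ^ 2 / 2 ≤ C := Real.one_sub_sq_div_two_le_cos
  have hCle : C ≤ 1 := Real.cos_le_one _
  have hsin : (k : ℝ) * θ - ((k : ℝ) * θ) ^ 3 / 4 < S :=
    by have := Real.sin_gt_sub_cube hkθpos; rw [← hS] at this; nlinarith [pow_pos hkθpos 3]
  have hSnonneg : 0 ≤ S :=
    Real.sin_nonneg_of_nonneg_of_le_pi hkθpos.le (by nlinarith)
  have hsin_le : S ≤ (k : ℝ) * Real.sin θ :=
    sin_nat_mul_le' θ hθpos.le k (by nlinarith)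
  constructor
  · -- lower bound
    -- cot θ ≥ (2 - θ²)/(2θ)
    have hcot : (2 - θ ^ 2) / (2 * θ) ≤ Real.cos θ / Real.sin θ := by
      rw [div_le_div_iff₀ (by positivity) hsθ]
      have e1 : (2 - θ ^ 2) * Real.sin θ ≤ (2 - θ ^ 2) * θ :=
        mul_le_mul_of_nonneg_left (Real.sin_le hθpos.le) (by nlinarith)
      have e2 : (1 - θ ^ 2 / 2) * (2 * θ) ≤ Real.cos θ * (2 * θ) :=
        mul_le_mul_of_nonneg_right Real.one_sub_sq_div_two_le_cos (by positivity)
      nlinarith [e1, e2]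
    have hcotpos : 0 ≤ (2 - θ ^ 2) / (2 * θ) := by
      apply div_nonneg _ (by positivity); nlinarith
    have hSlb : 0 ≤ (k : ℝ) * θ - ((k : ℝ) * θ) ^ 3 / 4 := by nlinarith
    have hprod : ((k : ℝ) * θ - ((k : ℝ) * θ) ^ 3 / 4) * ((2 - θ ^ 2) / (2 * θ))
        ≤ S * (Real.cos θ / Real.sin θ) :=
      mul_le_mul hsin.le hcot hcotpos hSnonneg
    have hexp : ((k : ℝ) * θ - ((k : ℝ) * θ) ^ 3 / 4) * ((2 - θ ^ 2) / (2 * θ))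
        = (k : ℝ) - (k : ℝ) * θ ^ 2 / 2 - (k : ℝ) ^ 3 * θ ^ 2 / 4
          + (k : ℝ) ^ 3 * θ ^ 4 / 8 := by
      field_simp; ring
    rw [hexp] at hprod
    have hf1 : (N - k) * (1 - ((k : ℝ) * θ) ^ 2 / 2) ≤ (N - k) * C :=
      mul_le_mul_of_nonneg_left hcos (by linarith)
    have hkk : (k : ℝ) ≤ N * (k : ℝ) ^ 2 := by nlinarith
    have key : N * (1 - (k : ℝ) ^ 2 * θ ^ 2) ≤
        (N - k) * (1 - ((k : ℝ) * θ) ^ 2 / 2) +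
          ((k : ℝ) - (k : ℝ) * θ ^ 2 / 2 - (k : ℝ) ^ 3 * θ ^ 2 / 4
            + (k : ℝ) ^ 3 * θ ^ 4 / 8) := by
      have hint1 : 0 ≤ (N * (k : ℝ) ^ 2 - k) * θ ^ 2 :=
        mul_nonneg (by linarith) (sq_nonneg θ)
      have hint2 : 0 ≤ (k : ℝ) ^ 3 * θ ^ 2 := by positivity
      have hint3 : 0 ≤ (k : ℝ) ^ 3 * θ ^ 4 := by positivity
      nlinarith [hint1, hint2, hint3]
    have main : N * (1 - (k : ℝ) ^ 2 * θ ^ 2) ≤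
        (N - k) * C + S * (Real.cos θ / Real.sin θ) := by linarith
    rw [hval, hπeq]
    have heq : 1 - (k : ℝ) ^ 2 * θ ^ 2 = (1 / N) * (N * (1 - (k : ℝ) ^ 2 * θ ^ 2)) := by
      field_simp
    rw [heq]
    have hre : S * (Real.cos θ / Real.sin θ) = S / Real.sin θ * Real.cos θ := by ring
    rw [hre] at main
    exact mul_le_mul_of_nonneg_left main (by positivity)
  · -- upper bound
    rw [hval]
    have h2 : S / Real.sin θ * Real.cos θ ≤ (k : ℝ) := by
      rw [div_mul_eq_mul_div, div_le_iff₀ hsθ]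
      have e1 : S * Real.cos θ ≤ (k : ℝ) * Real.sin θ * Real.cos θ :=
        mul_le_mul_of_nonneg_right hsin_le hcθ
      have e2 : (k : ℝ) * Real.sin θ * Real.cos θ ≤ (k : ℝ) * Real.sin θ * 1 :=
        mul_le_mul_of_nonneg_left (Real.cos_le_one θ) (by positivity)
      linarith
    have h1 : (N - k) * C ≤ (N - k) * 1 :=
      mul_le_mul_of_nonneg_left hCle (by linarith)
    rw [mul_one] at h1
    have hX : (N - k) * C + S / Real.sin θ * Real.cos θ ≤ N := by linarith
    calc (1 / N) * ((N - k) * C + S / Real.sin θ * Real.cos θ)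
        ≤ (1 / N) * N := mul_le_mul_of_nonneg_left hX (by positivity)
      _ = 1 := by field_simp

private lemma weierstrass_prod {ι : Type*} (s : Finset ι) (f : ι → ℝ)
    (h0 : ∀ i ∈ s, 0 ≤ f i) (h1 : ∀ i ∈ s, f i ≤ 1) :
    1 - ∑ i ∈ s, (1 - f i) ≤ ∏ i ∈ s, f i := by
  induction s using Finset.cons_induction with
  | empty => simp
  | cons a s ha ih =>
    rw [Finset.prod_cons, Finset.sum_cons]
    have h0' : ∀ i ∈ s, 0 ≤ f i := fun i hi => h0 i (Finset.mem_cons_of_mem hi)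
    have h1' : ∀ i ∈ s, f i ≤ 1 := fun i hi => h1 i (Finset.mem_cons_of_mem hi)
    have ih' := ih h0' h1'
    have hP : 0 ≤ ∏ i ∈ s, f i := Finset.prod_nonneg h0'
    have hSg : 0 ≤ ∑ i ∈ s, (1 - f i) :=
      Finset.sum_nonneg fun i hi => by linarith [h1' i hi]
    have ha0 := h0 a (Finset.mem_cons_self a s)
    have ha1 := h1 a (Finset.mem_cons_self a s)
    have e1 : f a * (1 - ∑ i ∈ s, (1 - f i)) ≤ f a * ∏ i ∈ s, f i :=
      mul_le_mul_of_nonneg_left ih' ha0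
    have e2 : 0 ≤ (1 - f a) * ∑ i ∈ s, (1 - f i) :=
      mul_nonneg (by linarith) hSg
    nlinarith [e1, e2]

/-- If `π d < r + 2` then, for every `α ∈ ℕ^n_d`, the product Jackson coefficient
`λ^r_α = ∏_i λ^r_{α_i}` satisfies `1 − π²d²/(r+2)² ≤ λ^r_α ≤ 1`, and in particular
`|1 − λ^r_α| ≤ π²d²/(r+2)²`. -/
theorem jackson_product_coef_bound (r d n : ℕ)
    (h : Real.pi * d < (r : ℝ) + 2) (α : Fin n → ℕ) (hα : α ∈ multiIdx n d) :
    (1 - Real.pi ^ 2 * d ^ 2 / ((r : ℝ) + 2) ^ 2 ≤ ∏ i, jacksonCoef r (α i) ∧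
      ∏ i, jacksonCoef r (α i) ≤ 1) ∧
    |1 - ∏ i, jacksonCoef r (α i)| ≤ Real.pi ^ 2 * d ^ 2 / ((r : ℝ) + 2) ^ 2 := by
  set N : ℝ := (r : ℝ) + 2 with hN
  have hNpos : (0 : ℝ) < N := by rw [hN]; positivity
  have hsum : ∑ i, α i ≤ d := by
    rw [multiIdx, Finset.mem_filter] at hα; exact hα.2
  have hαle : ∀ i, α i ≤ d := fun i =>
    le_trans (Finset.single_le_sum (fun j _ => Nat.zero_le (α j)) (Finset.mem_univ i)) hsum
  -- per-coordinate bounds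
  have hbound : ∀ i, 1 - Real.pi ^ 2 * (α i : ℝ) ^ 2 / N ^ 2 ≤ jacksonCoef r (α i) ∧
      jacksonCoef r (α i) ≤ 1 := by
    intro i
    apply jackson_coef_bound
    have h1 : (α i : ℝ) ≤ (d : ℝ) := by exact_mod_cast hαle i
    have h2 : (α i : ℝ) * (Real.pi / N) ≤ (d : ℝ) * (Real.pi / N) := by
      apply mul_le_mul_of_nonneg_right h1; positivity
    have h3 : (d : ℝ) * (Real.pi / N) < 1 := by
      rw [mul_div_assoc'] at *
      rw [div_lt_one hNpos]
      nlinarith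
    linarith
  have hnonneg : ∀ i, 0 ≤ jacksonCoef r (α i) := by
    intro i
    have h1 : Real.pi * (α i : ℝ) ≤ Real.pi * (d : ℝ) := by
      have : (α i : ℝ) ≤ (d : ℝ) := by exact_mod_cast hαle i
      nlinarith [Real.pi_pos]
    have h4 : Real.pi * (α i : ℝ) < N := lt_of_le_of_lt h1 h
    have h5 : 0 ≤ Real.pi * (α i : ℝ) :=
      mul_nonneg Real.pi_pos.le (Nat.cast_nonneg _)
    have h2 : Real.pi ^ 2 * (α i : ℝ) ^ 2 < N ^ 2 := by
      nlinarith [mul_pos (sub_pos.mpr h4) (by linarith : (0:ℝ) < N + Real.pi * (α i : ℝ))]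
    have h3 : Real.pi ^ 2 * (α i : ℝ) ^ 2 / N ^ 2 < 1 := by
      rw [div_lt_one (by positivity)]; exact h2
    linarith [(hbound i).1]
  have hle1 : ∏ i, jacksonCoef r (α i) ≤ 1 :=
    Finset.prod_le_one (fun i _ => hnonneg i) (fun i _ => (hbound i).2)
  -- sum of squares bound
  have hssq : (∑ i, (α i) ^ 2 : ℕ) ≤ d ^ 2 := by
    calc (∑ i, (α i) ^ 2 : ℕ) ≤ ∑ i, α i * (∑ j, α j) := by
          apply Finset.sum_le_sum
          intro i _
          rw [pow_two]
          exact Nat.mul_le_mul_left _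
            (Finset.single_le_sum (fun j _ => Nat.zero_le (α j)) (Finset.mem_univ i))
      _ = (∑ i, α i) * (∑ j, α j) := by rw [← Finset.sum_mul]
      _ ≤ d * d := Nat.mul_le_mul hsum hsum
      _ = d ^ 2 := (pow_two d).symm
  have hsum_e : ∑ i, Real.pi ^ 2 * (α i : ℝ) ^ 2 / N ^ 2 ≤ Real.pi ^ 2 * d ^ 2 / N ^ 2 := by
    have : ∑ i, Real.pi ^ 2 * (α i : ℝ) ^ 2 / N ^ 2
        = Real.pi ^ 2 * (∑ i, ((α i : ℝ)) ^ 2) / N ^ 2 := by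
      rw [Finset.mul_sum, Finset.sum_div]
    rw [this]
    have hcast : (∑ i, ((α i : ℝ)) ^ 2) ≤ (d : ℝ) ^ 2 := by exact_mod_cast hssq
    gcongr
  have hlow : 1 - Real.pi ^ 2 * (d : ℝ) ^ 2 / N ^ 2 ≤ ∏ i, jacksonCoef r (α i) := by
    have hw := weierstrass_prod Finset.univ (fun i => jacksonCoef r (α i))
      (fun i _ => hnonneg i) (fun i _ => (hbound i).2)
    have hsle : ∑ i, (1 - jacksonCoef r (α i)) ≤ ∑ i, Real.pi ^ 2 * (α i : ℝ) ^ 2 / N ^ 2 :=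
      Finset.sum_le_sum fun i _ => by linarith [(hbound i).1]
    calc 1 - Real.pi ^ 2 * (d : ℝ) ^ 2 / N ^ 2
        ≤ 1 - ∑ i, (1 - jacksonCoef r (α i)) := by linarith
      _ ≤ ∏ i, jacksonCoef r (α i) := hw
  refine ⟨⟨hlow, hle1⟩, ?_⟩
  rw [abs_of_nonneg (by linarith)]
  linarith
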